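/- For all x, y : Quaternion ℤ with x ≠ 0 and (star x * y).imK = 0, there exist q, r : Quaternion ℤ with q.imK = 0, y = x * q + r, and Quaternion.normSq r < Quaternion.normSq x. -/

import Mathlib

open Quaternion

lemma round_bound (n a : ℤ) (hn : 0 < n) :
    2 * |a - n * round ((a : ℚ) / n)| ≤ n := by
  have hn' : (0 : ℚ) < (n : ℚ) := by exact_mod_cast hn
  have h := abs_sub_round ((a : ℚ) / n)
  have h2 : |(a : ℚ) - n * round ((a : ℚ) / n)| ≤ n / 2 := by
    have : (a : ℚ) - n * round ((a : ℚ) / n) = n * ((a : ℚ) / n - round ((a : ℚ) / n)) := by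
      field_simp
    rw [this, abs_mul, abs_of_pos hn']
    calc (n : ℚ) * |(a : ℚ) / n - round ((a : ℚ) / n)| ≤ n * (1/2) := by
          exact mul_le_mul_of_nonneg_left h hn'.le
      _ = n / 2 := by ring
  have : (2 : ℚ) * |(a : ℚ) - n * round ((a : ℚ) / n)| ≤ n := by linarith
  have hcast : ((2 * |a - n * round ((a : ℚ) / n)| : ℤ) : ℚ) ≤ (n : ℚ) := by
    push_cast
    convert this using 2
  exact_mod_cast hcast

theorem lipschitz_order_clifford_euclidean (x y : Quaternion ℤ) (hx : x ≠ 0)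
    (hxy : (star x * y).imK = 0) :
    ∃ q r : Quaternion ℤ, q.imK = 0 ∧ y = x * q + r ∧
      Quaternion.normSq r < Quaternion.normSq x := by
  set n : ℤ := normSq x with hn
  have hn0 : 0 < n := lt_of_le_of_ne (normSq_nonneg) (Ne.symm (normSq_ne_zero.mpr hx))
  set z : Quaternion ℤ := star x * y with hz
  set q : Quaternion ℤ := ⟨round ((z.re : ℚ) / n), round ((z.imI : ℚ) / n),
    round ((z.imJ : ℚ) / n), 0⟩ with hq
  refine ⟨q, y - x * q, rfl, by abel, ?_⟩
  set r : Quaternion ℤ := y - x * q with hr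
  have key : star x * r = z - (n : Quaternion ℤ) * q := by
    rw [hr, mul_sub, ← mul_assoc, star_mul_self, ← hz, ← hn]
    norm_cast
  -- coefficients of c := z - n • q
  set c : Quaternion ℤ := z - (n : Quaternion ℤ) * q with hc
  have hcre : c.re = z.re - n * q.re := by simp [hc]
  have hcI : c.imI = z.imI - n * q.imI := by simp [hc]
  have hcJ : c.imJ = z.imJ - n * q.imJ := by simp [hc]
  have hcK : c.imK = 0 := by simp [hc, hxy, Quaternion.imK_mul, Quaternion.imK_intCast, Quaternion.imI_intCast, Quaternion.imJ_intCast]; exact Or.inr rfl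
  have b1 := round_bound n z.re hn0
  have b2 := round_bound n z.imI hn0
  have b3 := round_bound n z.imJ hn0
  have sq1 : 4 * c.re ^ 2 ≤ n ^ 2 := by
    have := mul_self_le_mul_self (by positivity) b1
    rw [hcre]; nlinarith [abs_mul_abs_self (z.re - n * q.re), sq_abs (z.re - n * q.re)]
  have sq2 : 4 * c.imI ^ 2 ≤ n ^ 2 := by
    have := mul_self_le_mul_self (by positivity) b2
    rw [hcI]; nlinarith [abs_mul_abs_self (z.imI - n * q.imI), sq_abs (z.imI - n * q.imI)]
  have sq3 : 4 * c.imJ ^ 2 ≤ n ^ 2 := by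
    have := mul_self_le_mul_self (by positivity) b3
    rw [hcJ]; nlinarith [abs_mul_abs_self (z.imJ - n * q.imJ), sq_abs (z.imJ - n * q.imJ)]
  have hnc : normSq c < n ^ 2 := by
    rw [normSq_def']
    have : c.imK ^ 2 = 0 := by rw [hcK]; ring
    nlinarith
  have hmul : normSq c = n * normSq r := by
    rw [← key, map_mul, normSq_star]
  rw [hmul, sq] at hnc
  exact lt_of_mul_lt_mul_left hnc hn0.le
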